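/- Let h > 0 and let g : ℝ≥0 → ℝ be continuous with g(0) = 0 and g(t) ≥ 0 for all t. Then the two-sided Skorohod reflection satisfies Λ_{0,h}(g)(t) ≤ g(t) for all t; equivalently, the h-cut g_h := g − Λ_{0,h}(g) is non-negative. -/

import Mathlib

open Set
open scoped NNReal ENNReal

/-- Solution data for the two-sided Skorohod reflection problem of `f` on `[0,h]`:
`c0` and `ch` are the compensators at `0` and at `h`,
and `fun t => f t + ch t + c0 t` is the reflected path `Λ_{0,h}(f)`.
The support conditions on the measures `dc⁰` and `d(−cʰ)` are phrased as:
the compensator is constant on every (closed) interval on which the reflected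
path avoids the corresponding boundary. -/
structure SkorohodPair (h : ℝ) (f c0 ch : ℝ≥0 → ℝ) : Prop where
  cont0 : Continuous c0
  conth : Continuous ch
  init0 : c0 0 = 0
  inith : ch 0 = 0
  mem_Icc : ∀ t, f t + ch t + c0 t ∈ Set.Icc (0 : ℝ) h
  mono0 : Monotone c0
  antih : Antitone ch
  flat0 : ∀ a b : ℝ≥0, a ≤ b → (∀ t ∈ Set.Icc a b, f t + ch t + c0 t ≠ 0) → c0 b = c0 a
  flath : ∀ a b : ℝ≥0, a ≤ b → (∀ t ∈ Set.Icc a b, f t + ch t + c0 t ≠ h) → ch b = ch a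

/-- For a non-negative continuous `g` with `g 0 = 0`, the two-sided Skorohod reflection
satisfies `Λ_{0,h}(g) ≤ g`; equivalently, the `h`-cut `g_h = g − Λ_{0,h}(g)` is non-negative. -/
theorem two_sided_reflection_le_self
    (h : ℝ) (hh : 0 < h) (g : ℝ≥0 → ℝ) (hg : Continuous g) (hg0 : g 0 = 0)
    (hpos : ∀ t, 0 ≤ g t)
    (c0 ch : ℝ≥0 → ℝ) (hp : SkorohodPair h g c0 ch) :
    ∀ t, g t + ch t + c0 t ≤ g t := by
  intro t0
  by_contra hcon
  push_neg at hcon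
  have hkt0 : 0 < c0 t0 + ch t0 := by linarith
  let S : Set ℝ≥0 := {u | u ≤ t0 ∧ c0 u + ch u ≤ 0}
  have hS : S = {u | u ≤ t0 ∧ c0 u + ch u ≤ 0} := rfl
  have hne : S.Nonempty := ⟨0, by simp [hS, hp.init0, hp.inith]⟩
  have hbdd : BddAbove S := ⟨t0, fun u hu => hu.1⟩
  have hclosed : IsClosed S := by
    have : S = Iic t0 ∩ {u | c0 u + ch u ≤ 0} := by
      ext u; simp [hS, Set.mem_Iic]
    rw [this]
    exact isClosed_Iic.inter (isClosed_le (hp.cont0.add hp.conth) continuous_const)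
  set s := sSup S with hs
  have hsmem : s ∈ S := hclosed.csSup_mem hne hbdd
  have hst0 : s ≤ t0 := hsmem.1
  have hks : c0 s + ch s ≤ 0 := hsmem.2
  have hslt : s < t0 := lt_of_le_of_ne hst0 (by intro heq; rw [heq] at hks; linarith)
  have hkpos : ∀ u, s < u → u ≤ t0 → 0 < c0 u + ch u := by
    intro u hu hut
    by_contra hku
    push_neg at hku
    exact absurd (le_csSup hbdd ⟨hut, hku⟩) (not_le.mpr hu)
  have hc0 : ∀ a, s < a → a ≤ t0 → c0 t0 = c0 a := by
    intro a ha hat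
    apply hp.flat0 a t0 hat
    intro t ht hzero
    have h1 : 0 < c0 t + ch t := hkpos t (lt_of_lt_of_le ha ht.1) ht.2
    have h2 := hpos t
    linarith
  have h1 : Filter.Tendsto c0 (nhdsWithin s (Set.Ioi s)) (nhds (c0 s)) :=
    (hp.cont0.tendsto s).mono_left nhdsWithin_le_nhds
  have hnb : (nhdsWithin s (Set.Ioi s)).NeBot := nhdsGT_neBot_of_exists_gt ⟨t0, hslt⟩
  have h2 : Filter.Tendsto c0 (nhdsWithin s (Set.Ioi s)) (nhds (c0 t0)) := by
    apply Filter.Tendsto.congr' _ tendsto_const_nhds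
    filter_upwards [Ioc_mem_nhdsGT_of_mem ⟨le_refl s, hslt⟩] with a ha
    exact hc0 a ha.1 ha.2
  have heq : c0 t0 = c0 s := tendsto_nhds_unique h2 h1
  have hch : ch t0 ≤ ch s := hp.antih hst0
  linarith
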